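/- Let J be a nonempty finite set, p a probability vector on J with p_j > 0 for every j, and g : J → ℝ. Then the supremum over all probability vectors q on J of Σ_j q_j g_j − Σ_j q_j log(q_j/p_j) (with the convention 0 log 0 = 0) equals log Σ_j p_j e^{g_j}, and it is attained uniquely at the 'twisted' probability vector q*_j := p_j e^{g_j} / Σ_k p_k e^{g_k} (the Gibbs variational principle). -/
import Mathlib


open scoped BigOperators

/-- **Gibbs variational principle** on a nonempty finite set `J`.
For a strictly positive probability vector `p` on `J` and `g : J → ℝ`, the
supremum over probability vectors `q` of
`∑ j, q j * g j − ∑ j, q j * log (q j / p j)` (with `0 log 0 = 0`) equals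
`log ∑ j, p j * exp (g j)`, is attained, and the maximizer is unique, namely
the twisted vector `q* j = p j * exp (g j) / ∑ k, p k * exp (g k)`. -/
theorem gibbs_variational_principle
    {J : Type*} [Fintype J] [Nonempty J]
    (p : J → ℝ) (hp : ∀ j, 0 < p j) (hpsum : ∑ j, p j = 1)
    (g : J → ℝ)
    (qstar : J → ℝ)
    (hqstar : ∀ j, qstar j = p j * Real.exp (g j) / ∑ k, p k * Real.exp (g k)) :
    IsGreatest
      {v : ℝ | ∃ q : J → ℝ, (∀ j, 0 ≤ q j) ∧ (∑ j, q j = 1) ∧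
        v = (∑ j, q j * g j) -
            ∑ j, (if 0 < q j then q j * Real.log (q j / p j) else 0)}
      (Real.log (∑ j, p j * Real.exp (g j))) ∧
    ((∑ j, qstar j * g j) -
        (∑ j, (if 0 < qstar j then qstar j * Real.log (qstar j / p j) else 0)) =
      Real.log (∑ j, p j * Real.exp (g j))) ∧
    (∀ q : J → ℝ, (∀ j, 0 ≤ q j) → (∑ j, q j = 1) →
      ((∑ j, q j * g j) -
          (∑ j, (if 0 < q j then q j * Real.log (q j / p j) else 0)) =
        Real.log (∑ j, p j * Real.exp (g j))) →
      q = qstar) := by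
  set Z : ℝ := ∑ k, p k * Real.exp (g k) with hZdef
  have hZ : 0 < Z :=
    Finset.sum_pos (fun k _ => mul_pos (hp k) (Real.exp_pos _)) Finset.univ_nonempty
  have hqs_pos : ∀ j, 0 < qstar j := fun j => by
    rw [hqstar]; exact div_pos (mul_pos (hp j) (Real.exp_pos _)) hZ
  have hqs_sum : ∑ j, qstar j = 1 := by
    simp only [hqstar]
    rw [← Finset.sum_div, ← hZdef, div_self hZ.ne']
  -- key identity
  have key : ∀ q : J → ℝ, (∀ j, 0 ≤ q j) → (∑ j, q j = 1) →
      (∑ j, q j * g j) - (∑ j, (if 0 < q j then q j * Real.log (q j / p j) else 0))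
        = Real.log Z + ∑ j, (if 0 < q j then q j * Real.log (qstar j / q j) else 0) := by
    intro q hq0 hq1
    have hterm : ∀ j, q j * g j - (if 0 < q j then q j * Real.log (q j / p j) else 0)
        = q j * Real.log Z + (if 0 < q j then q j * Real.log (qstar j / q j) else 0) := by
      intro j
      by_cases h : 0 < q j
      · simp only [if_pos h]
        have hpj := hp j
        have hq : q j ≠ 0 := h.ne'
        have e1 : Real.log (qstar j / q j) = Real.log (qstar j) - Real.log (q j) :=
          Real.log_div (hqs_pos j).ne' hq
        have e2 : Real.log (q j / p j) = Real.log (q j) - Real.log (p j) :=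
          Real.log_div hq hpj.ne'
        have e3 : Real.log (qstar j) = Real.log (p j) + g j - Real.log Z := by
          rw [hqstar, Real.log_div (mul_pos hpj (Real.exp_pos _)).ne' hZ.ne',
            Real.log_mul hpj.ne' (Real.exp_ne_zero _), Real.log_exp]
        rw [e1, e2, e3]; ring
      · have hqj : q j = 0 := le_antisymm (not_lt.mp h) (hq0 j)
        simp [hqj, if_neg h]
    calc (∑ j, q j * g j) - ∑ j, (if 0 < q j then q j * Real.log (q j / p j) else 0)
        = ∑ j, (q j * g j - (if 0 < q j then q j * Real.log (q j / p j) else 0)) := by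
          rw [Finset.sum_sub_distrib]
      _ = ∑ j, (q j * Real.log Z + (if 0 < q j then q j * Real.log (qstar j / q j) else 0)) :=
          Finset.sum_congr rfl (fun j _ => hterm j)
      _ = (∑ j, q j) * Real.log Z
            + ∑ j, (if 0 < q j then q j * Real.log (qstar j / q j) else 0) := by
          rw [Finset.sum_add_distrib, Finset.sum_mul]
      _ = Real.log Z + ∑ j, (if 0 < q j then q j * Real.log (qstar j / q j) else 0) := by
          rw [hq1, one_mul]
  -- bound and equality analysis
  have bound : ∀ q : J → ℝ, (∀ j, 0 ≤ q j) → (∑ j, q j = 1) →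
      (∑ j, (if 0 < q j then q j * Real.log (qstar j / q j) else 0)) ≤ 0 ∧
      ((∑ j, (if 0 < q j then q j * Real.log (qstar j / q j) else 0)) = 0 → q = qstar) := by
    intro q hq0 hq1
    have hab : ∀ j, (if 0 < q j then q j * Real.log (qstar j / q j) else 0) ≤ qstar j - q j := by
      intro j
      by_cases h : 0 < q j
      · simp only [if_pos h]
        have hx : 0 < qstar j / q j := div_pos (hqs_pos j) h
        calc q j * Real.log (qstar j / q j) ≤ q j * (qstar j / q j - 1) :=
              mul_le_mul_of_nonneg_left (Real.log_le_sub_one_of_pos hx) (hq0 j)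
          _ = qstar j - q j := by field_simp
      · have hqj : q j = 0 := le_antisymm (not_lt.mp h) (hq0 j)
        simp [hqj, if_neg h, (hqs_pos j).le]
    have hsum_b : ∑ j, (qstar j - q j) = 0 := by
      rw [Finset.sum_sub_distrib, hqs_sum, hq1]; ring
    constructor
    · calc (∑ j, (if 0 < q j then q j * Real.log (qstar j / q j) else 0))
          ≤ ∑ j, (qstar j - q j) := Finset.sum_le_sum (fun j _ => hab j)
        _ = 0 := hsum_b
    · intro hS
      have heq := (Finset.sum_eq_sum_iff_of_le (fun j (_ : j ∈ Finset.univ) => hab j)).mp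
        (by rw [hS, hsum_b])
      funext j
      have hj := heq j (Finset.mem_univ j)
      by_cases h : 0 < q j
      · rw [if_pos h] at hj
        have hx : 0 < qstar j / q j := div_pos (hqs_pos j) h
        by_contra hne
        have hx1 : qstar j / q j ≠ 1 := by
          intro h1
          exact hne ((div_eq_one_iff_eq h.ne').mp h1).symm
        have hlt : q j * Real.log (qstar j / q j) < q j * (qstar j / q j - 1) :=
          mul_lt_mul_of_pos_left (Real.log_lt_sub_one_of_pos hx hx1) h
        have he : q j * (qstar j / q j - 1) = qstar j - q j := by field_simp
        rw [hj, he] at hlt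
        exact lt_irrefl _ hlt
      · rw [if_neg h] at hj
        have hqj : q j = 0 := le_antisymm (not_lt.mp h) (hq0 j)
        exfalso
        have := hqs_pos j
        rw [hqj] at hj
        linarith
  -- value at qstar
  have hSstar : (∑ j, (if 0 < qstar j then qstar j * Real.log (qstar j / qstar j) else 0)) = 0 := by
    apply Finset.sum_eq_zero
    intro j _
    rw [div_self (hqs_pos j).ne', Real.log_one, mul_zero, if_pos (hqs_pos j)]
  have hFstar : (∑ j, qstar j * g j) -
      (∑ j, (if 0 < qstar j then qstar j * Real.log (qstar j / p j) else 0)) = Real.log Z := by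
    rw [key qstar (fun j => (hqs_pos j).le) hqs_sum, hSstar, add_zero]
  refine ⟨⟨⟨qstar, fun j => (hqs_pos j).le, hqs_sum, hFstar.symm⟩, ?_⟩, hFstar, ?_⟩
  · rintro v ⟨q, hq0, hq1, rfl⟩
    rw [key q hq0 hq1]
    linarith [(bound q hq0 hq1).1]
  · intro q hq0 hq1 hF
    rw [key q hq0 hq1] at hF
    exact (bound q hq0 hq1).2 (by linarith)
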